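/- Let ψ : [1, ∞) → ℝ satisfy ψ(1) = 0 and α ↦ ψ(α)/(α−1) monotone increasing, and set D∞ := lim_{α→∞} ψ(α)/(α−1) and Ψ⁻(c) := sup_{α ≥ 1} {c(α−1) − ψ(α)}. If c > D∞ then Ψ⁻(c) = +∞, and if D₁⁺ := inf_{α>1} ψ(α)/(α−1) > −∞ and c < D∞ then Ψ⁻(c) is finite; in fact Ψ⁻(c) ≤ (α_{c,max} − 1)(c − D₁⁺) where α_{c,max} := sup{α > 1 : ψ(α)/(α−1) < c}. -/

import Mathlib

open Set

/-- Shifted Legendre–Fenchel transform `Ψ⁻(c) = sup_{α≥1} {c(α−1) − ψ(α)}`. -/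
noncomputable def PsimE (ψ : ℝ → ℝ) (c : ℝ) : EReal :=
  ⨆ α ∈ Set.Ici (1 : ℝ), ((c * (α - 1) - ψ α : ℝ) : EReal)

/-- `D∞ := lim_{α→∞} ψ(α)/(α−1)`, which equals the supremum by monotonicity. -/
noncomputable def DinfE (ψ : ℝ → ℝ) : EReal :=
  ⨆ α ∈ Set.Ioi (1 : ℝ), ((ψ α / (α - 1) : ℝ) : EReal)

theorem stmt10 (ψ : ℝ → ℝ) (hψ1 : ψ 1 = 0)
    (hmono : MonotoneOn (fun α => ψ α / (α - 1)) (Set.Ioi (1 : ℝ))) :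
    (∀ c : ℝ, DinfE ψ < (c : EReal) → PsimE ψ c = (⊤ : EReal)) ∧
    (BddBelow ((fun α => ψ α / (α - 1)) '' Set.Ioi (1 : ℝ)) →
      ∀ c : ℝ, (c : EReal) < DinfE ψ →
        PsimE ψ c ≤
          (((sSup {α : ℝ | 1 < α ∧ ψ α / (α - 1) < c} - 1) *
            (c - sInf ((fun α => ψ α / (α - 1)) '' Set.Ioi (1 : ℝ))) : ℝ) : EReal)) := by
  constructor
  · -- Part 1
    intro c hlt
    have hbot : (⊥ : EReal) < DinfE ψ := by
      refine lt_of_lt_of_le (EReal.bot_lt_coe (ψ 2 / (2 - 1))) ?_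
      exact le_iSup₂ (f := fun α _ => ((ψ α / (α - 1) : ℝ) : EReal)) 2 (by norm_num)
    have htop : DinfE ψ < ⊤ := lt_of_lt_of_le hlt le_top
    set d : ℝ := (DinfE ψ).toReal with hd
    have hD : DinfE ψ = (d : EReal) := (EReal.coe_toReal htop.ne hbot.ne').symm
    have hdc : d < c := by
      rw [hD] at hlt; exact_mod_cast hlt
    have hub : ∀ α : ℝ, 1 < α → ψ α / (α - 1) ≤ d := by
      intro α hα
      have : ((ψ α / (α - 1) : ℝ) : EReal) ≤ DinfE ψ :=
        le_iSup₂ (f := fun α _ => ((ψ α / (α - 1) : ℝ) : EReal)) α hα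
      rw [hD] at this; exact_mod_cast this
    rw [EReal.eq_top_iff_forall_lt]
    intro b
    have hcd : (0:ℝ) < c - d := by linarith
    set α : ℝ := 1 + (|b| + 1) / (c - d) with hαdef
    have hq : (0:ℝ) < (|b| + 1) / (c - d) :=
      div_pos (by positivity) hcd
    have hα : 1 < α := by simp [hαdef]; linarith
    have hα1 : (0:ℝ) < α - 1 := by linarith
    have hψα : ψ α ≤ d * (α - 1) := by
      have := hub α hα
      rw [div_le_iff₀ hα1] at this; linarith [this]
    have key : b < c * (α - 1) - ψ α := by
      have h1 : (c - d) * (α - 1) = |b| + 1 := by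
        have : α - 1 = (|b| + 1) / (c - d) := by simp [hαdef]
        rw [this]; field_simp
      have h2 : c * (α - 1) - ψ α ≥ (c - d) * (α - 1) := by nlinarith
      calc b ≤ |b| := le_abs_self b
        _ < |b| + 1 := by linarith
        _ = (c - d) * (α - 1) := h1.symm
        _ ≤ c * (α - 1) - ψ α := h2
    refine lt_of_lt_of_le (b := ((c * (α - 1) - ψ α : ℝ) : EReal)) (by exact_mod_cast key) ?_
    exact le_iSup₂ (f := fun α _ => ((c * (α - 1) - ψ α : ℝ) : EReal)) α (le_of_lt hα)
  · -- Part 2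
    intro hbdd c hlt
    set f : ℝ → ℝ := fun α => ψ α / (α - 1) with hf
    set m : ℝ := sInf (f '' Set.Ioi (1:ℝ)) with hm
    set A : Set ℝ := {α : ℝ | 1 < α ∧ f α < c} with hA
    set s : ℝ := sSup A with hs
    -- get α₁ with c < f α₁
    obtain ⟨α₁, hα₁, hcα₁⟩ : ∃ α₁, 1 < α₁ ∧ c < f α₁ := by
      have := hlt
      unfold DinfE at this
      simp only [lt_iSup_iff] at this
      obtain ⟨α₁, h1, h2⟩ := this
      exact ⟨α₁, h1, by exact_mod_cast h2⟩
    have hmle : ∀ α : ℝ, 1 < α → m ≤ f α := fun α hα =>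
      csInf_le hbdd ⟨α, hα, rfl⟩
    have hAsub : A ⊆ Set.Ioo 1 α₁ := by
      intro β hβ
      refine ⟨hβ.1, ?_⟩
      by_contra h
      push_neg at h
      have : f α₁ ≤ f β := hmono hα₁ (lt_of_lt_of_le hα₁ h) h
      linarith [hβ.2, this]
    have hbddA : BddAbove A := ⟨α₁, fun β hβ => (hAsub hβ).2.le⟩
    -- RHS nonneg
    have hRHS : 0 ≤ (s - 1) * (c - m) := by
      rcases A.eq_empty_or_nonempty with hAe | ⟨β, hβ⟩
      · have hs0 : s = 0 := by rw [hs, hAe, Real.sSup_empty]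
        have hcm : c ≤ m := by
          refine le_csInf ⟨f 2, 2, by norm_num, rfl⟩ ?_
          rintro x ⟨α, hα, rfl⟩
          by_contra h
          push_neg at h
          have hmem : α ∈ A := ⟨hα, h⟩
          rw [hAe] at hmem; exact hmem
        rw [hs0]; nlinarith
      · have hβs : β ≤ s := le_csSup hbddA hβ
        have h1β : (1:ℝ) < β := hβ.1
        have hmc : m < c := lt_of_le_of_lt (hmle β h1β) hβ.2
        nlinarith
    refine iSup₂_le ?_
    intro α hα
    rw [show (((s - 1) * (c - m) : ℝ) : EReal) = (((s - 1) * (c - m) : ℝ) : EReal) from rfl]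
    refine EReal.coe_le_coe_iff.mpr ?_
    rcases eq_or_lt_of_le (Set.mem_Ici.mp hα : (1:ℝ) ≤ α) with heq | hα1
    · rw [← heq, hψ1]; simpa using hRHS
    · have hα0 : (0:ℝ) < α - 1 := by linarith
      have hψeq : ψ α = f α * (α - 1) := by
        show ψ α = ψ α / (α - 1) * (α - 1)
        exact (div_mul_cancel₀ _ hα0.ne').symm
      rcases lt_or_ge (f α) c with hfc | hfc
      · have hαA : α ∈ A := ⟨hα1, hfc⟩
        have hαs : α ≤ s := le_csSup hbddA hαA
        have hmfα : m ≤ f α := hmle α hα1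
        have : c * (α - 1) - ψ α = (α - 1) * (c - f α) := by rw [hψeq]; ring
        rw [this]
        have h1 : (α - 1) * (c - f α) ≤ (s - 1) * (c - f α) := by nlinarith
        have h2 : (s - 1) * (c - f α) ≤ (s - 1) * (c - m) := by nlinarith
        linarith
      · have : c * (α - 1) - ψ α = (α - 1) * (c - f α) := by rw [hψeq]; ring
        rw [this]
        nlinarith
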